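/- Let g:[a,b]→ℝ be left-continuous on (a,b) and increasing, and let f:[a,b]→ℝ be g-Lipschitz continuous with constant H. Then the jump part f^B of f is g^B-Lipschitz continuous with constant H, i.e., |f^B(t)−f^B(s)| ≤ H|g^B(t)−g^B(s)| for all t,s ∈ [a,b]. -/

import Mathlib

open Set

/-- Right jump of a function: `u(t⁺) - u(t)`. -/
noncomputable def rjump (u : ℝ → ℝ) (t : ℝ) : ℝ := Function.rightLim u t - u t

/-- Cumulative jump part of `u` on `[a, t)`: `u^B(t) = Σ_{s ∈ [a,t)} Δ⁺u(s)`. -/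
noncomputable def jumpPart (u : ℝ → ℝ) (a t : ℝ) : ℝ :=
  ∑' s : ℝ, Set.indicator (Set.Ico a t) (fun v => rjump u v) s

/-- Continuous part of `u` (relative to the base point `a`): `u^C = u - u^B`. -/
noncomputable def contPart (u : ℝ → ℝ) (a t : ℝ) : ℝ := u t - jumpPart u a t

/-- `I` is the Kurzweil–Stieltjes integral `∫_a^b f dg`: for every `ε > 0` there is a
gauge `δ` such that every `δ`-fine tagged partition of `[a,b]` has Riemann–Stieltjes
sum within `ε` of `I`. -/
def IsKSIntegral (f g : ℝ → ℝ) (a b I : ℝ) : Prop :=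
  ∀ ε > (0:ℝ), ∃ δ : ℝ → ℝ, (∀ x, 0 < δ x) ∧
    ∀ (n : ℕ) (t ξ : ℕ → ℝ),
      t 0 = a → t n = b →
      (∀ i < n, t i < t (i + 1)) →
      (∀ i < n, t i ≤ ξ i ∧ ξ i ≤ t (i + 1)) →
      (∀ i < n, ξ i - δ (ξ i) < t i ∧ t (i + 1) < ξ i + δ (ξ i)) →
      |(∑ i ∈ Finset.range n, f (ξ i) * (g (t (i + 1)) - g (t i))) - I| < ε

/-- `f` is `g`-Lipschitz continuous on `[a,b]` with constant `H`. -/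
def GLipschitzOn (f g : ℝ → ℝ) (H a b : ℝ) : Prop :=
  ∀ t ∈ Set.Icc a b, ∀ s ∈ Set.Icc a b, |f t - f s| ≤ H * |g t - g s|

/-- `g` is left-continuous at every point of `s`. -/
def LeftContOn (g : ℝ → ℝ) (s : Set ℝ) : Prop :=
  ∀ t ∈ s, Filter.Tendsto g (nhdsWithin t (Set.Iio t)) (nhds (g t))

/-- Monotone extension of `g : [a,b] → ℝ` to all of `ℝ` by projection. -/
noncomputable def Gext (g : ℝ → ℝ) (a b : ℝ) : ℝ → ℝ := fun x => g (max a (min x b))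

lemma Gext_mono {g : ℝ → ℝ} {a b : ℝ} (hab : a ≤ b) (hg : MonotoneOn g (Set.Icc a b)) :
    Monotone (Gext g a b) := by
  intro x y hxy
  have hx : max a (min x b) ∈ Set.Icc a b :=
    ⟨le_max_left _ _, max_le hab (min_le_right _ _)⟩
  have hy : max a (min y b) ∈ Set.Icc a b :=
    ⟨le_max_left _ _, max_le hab (min_le_right _ _)⟩
  exact hg hx hy (max_le_max le_rfl (min_le_min hxy le_rfl))

lemma Gext_eq {g : ℝ → ℝ} {a b x : ℝ} (hx : x ∈ Set.Icc a b) : Gext g a b x = g x := by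
  have h1 : min x b = x := min_eq_left hx.2
  have h2 : max a x = x := max_eq_right hx.1
  simp [Gext, h1, h2]

/-- The sum of right jumps of a monotone function over finitely many points of `[a, c)`
is at most `G c - G a`. -/
lemma jump_sum_le {G : ℝ → ℝ} (hG : Monotone G) (a : ℝ) (S : Finset ℝ) :
    ∀ c : ℝ, a ≤ c → (∀ v ∈ S, a ≤ v ∧ v < c) →
      ∑ v ∈ S, (Function.rightLim G v - G v) ≤ G c - G a := by
  classical
  induction S using Finset.induction_on_max with
  | empty =>
    intro c hac _
    simpa using sub_nonneg.2 (hG hac)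
  | insert m s hm ih =>
    intro c hac hmem
    have ham : a ≤ m := (hmem m (Finset.mem_insert_self m s)).1
    have hmc : m < c := (hmem m (Finset.mem_insert_self m s)).2
    have hms : m ∉ s := fun h => lt_irrefl m (hm m h)
    rw [Finset.sum_insert hms]
    have h1 : ∑ v ∈ s, (Function.rightLim G v - G v) ≤ G m - G a :=
      ih m ham fun v hv => ⟨(hmem v (Finset.mem_insert_of_mem hv)).1, hm v hv⟩
    have h2 : Function.rightLim G m ≤ G c := hG.rightLim_le hmc
    linarith

/-- Key pointwise facts about the jumps. -/
lemma rjump_key (a b H : ℝ) (hab : a ≤ b) (g f : ℝ → ℝ)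
    (hg : MonotoneOn g (Set.Icc a b)) (hf : GLipschitzOn f g H a b) :
    ∀ v ∈ Set.Ico a b, 0 ≤ rjump g v ∧ |rjump f v| ≤ H * rjump g v ∧
      rjump g v = Function.rightLim (Gext g a b) v - g v := by
  classical
  -- the function f factors through g via a Lipschitz map
  have hgf : ∀ x ∈ Set.Icc a b, ∀ y ∈ Set.Icc a b, g x = g y → f x = f y := by
    intro x hx y hy hxy
    have h := hf x hx y hy
    rw [hxy, sub_self, abs_zero, mul_zero] at h
    have : |f x - f y| = 0 := le_antisymm h (abs_nonneg _)
    have := abs_eq_zero.mp this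
    linarith [sub_eq_zero.mp this]
  set H' : NNReal := ⟨max H 0, le_max_right H 0⟩ with hH'
  have hH'c : (H' : ℝ) = max H 0 := rfl
  set φ₀ : ℝ → ℝ := fun y =>
    if h : ∃ x, x ∈ Set.Icc a b ∧ g x = y then f h.choose else 0 with hφ₀def
  have hφ₀ : ∀ x ∈ Set.Icc a b, φ₀ (g x) = f x := by
    intro x hx
    have h : ∃ x', x' ∈ Set.Icc a b ∧ g x' = g x := ⟨x, hx, rfl⟩
    rw [hφ₀def]
    simp only [dif_pos h]
    exact hgf _ h.choose_spec.1 x hx h.choose_spec.2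
  have hlip : LipschitzOnWith H' φ₀ (g '' Set.Icc a b) := by
    apply LipschitzOnWith.of_dist_le_mul
    rintro y1 ⟨x1, hx1, rfl⟩ y2 ⟨x2, hx2, rfl⟩
    rw [hφ₀ x1 hx1, hφ₀ x2 hx2, Real.dist_eq, Real.dist_eq]
    exact (hf x1 hx1 x2 hx2).trans
      (mul_le_mul_of_nonneg_right (le_max_left H 0) (abs_nonneg _))
  obtain ⟨φ, hφ, hφeq⟩ := hlip.extend_real
  have hfφ : ∀ x ∈ Set.Icc a b, f x = φ (g x) := by
    intro x hx
    rw [← hφeq ⟨x, hx, rfl⟩, hφ₀ x hx]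
  set G := Gext g a b with hGdef
  have hGmono : Monotone G := Gext_mono hab hg
  intro v hv
  have hav : a ≤ v := hv.1
  have hvb : v < b := hv.2
  have hvI : v ∈ Set.Icc a b := ⟨hav, hvb.le⟩
  have hne : (nhdsWithin v (Set.Ioi v)) ≠ ⊥ := (nhdsGT_neBot v).ne
  have hmem : Set.Ioo v b ∈ nhdsWithin v (Set.Ioi v) :=
    Ioo_mem_nhdsGT_of_mem ⟨le_rfl, hvb⟩
  have hIcc : ∀ x ∈ Set.Ioo v b, x ∈ Set.Icc a b :=
    fun x hx => ⟨hav.trans hx.1.le, hx.2.le⟩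
  set R := Function.rightLim G v with hRdef
  have tendsG : Filter.Tendsto G (nhdsWithin v (Set.Ioi v)) (nhds R) :=
    hGmono.tendsto_rightLim v
  have hGg : ∀ᶠ x in nhdsWithin v (Set.Ioi v), G x = g x :=
    Filter.eventually_of_mem hmem fun x hx => Gext_eq (hIcc x hx)
  have tendsg : Filter.Tendsto g (nhdsWithin v (Set.Ioi v)) (nhds R) :=
    tendsG.congr' hGg
  have hrg : Function.rightLim g v = R := rightLim_eq_of_tendsto tendsg
  have tendsf : Filter.Tendsto f (nhdsWithin v (Set.Ioi v)) (nhds (φ R)) := by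
    have h1 : Filter.Tendsto (fun x => φ (G x)) (nhdsWithin v (Set.Ioi v)) (nhds (φ R)) :=
      (hφ.continuous.tendsto R).comp tendsG
    refine h1.congr' ?_
    refine Filter.eventually_of_mem hmem fun x hx => ?_
    show φ (G x) = f x
    rw [hGdef, Gext_eq (hIcc x hx), ← hfφ x (hIcc x hx)]
  have hrf : Function.rightLim f v = φ R := rightLim_eq_of_tendsto tendsf
  have hGv : G v = g v := Gext_eq hvI
  have hRge : g v ≤ R := hGv ▸ hGmono.le_rightLim le_rfl
  have hrjg : rjump g v = R - g v := by rw [rjump, hrg]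
  have hrjgG : rjump g v = Function.rightLim G v - g v := hrjg
  have h0 : 0 ≤ rjump g v := by rw [hrjg]; linarith
  have hbound : |rjump f v| ≤ (max H 0) * rjump g v := by
    rw [rjump, hrf, hfφ v hvI, hrjg]
    have := hφ.dist_le_mul R (g v)
    rw [Real.dist_eq, Real.dist_eq, hH'c] at this
    rwa [abs_of_nonneg (by linarith : (0:ℝ) ≤ R - g v)] at this
  refine ⟨h0, ?_, hrjgG⟩
  rcases le_or_gt 0 H with hH | hH
  · rwa [max_eq_left hH] at hbound
  · -- H < 0 forces g to be constant on [a,b], so there are no jumps at all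
    have hconst : ∀ x ∈ Set.Icc a b, ∀ y ∈ Set.Icc a b, g x = g y := by
      intro x hx y hy
      have h := hf x hx y hy
      have h2 : |g x - g y| ≤ 0 := by nlinarith [abs_nonneg (f x - f y), abs_nonneg (g x - g y)]
      have := abs_eq_zero.mp (le_antisymm h2 (abs_nonneg _))
      linarith [sub_eq_zero.mp this]
    have tendsg' : Filter.Tendsto g (nhdsWithin v (Set.Ioi v)) (nhds (g v)) := by
      refine Filter.Tendsto.congr' ?_ tendsto_const_nhds
      exact Filter.eventually_of_mem hmem fun x hx => (hconst v hvI x (hIcc x hx)).symm ▸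
        (hconst x (hIcc x hx) v hvI)
    have hRv : R = g v := tendsto_nhds_unique tendsg tendsg'
    have hz : rjump g v = 0 := by rw [hrjg, hRv, sub_self]
    rw [hz, mul_zero]
    have := hbound
    rw [hz, mul_zero] at this
    exact this

set_option maxHeartbeats 1000000 in
/-- If `g : [a,b] → ℝ` is left-continuous on `(a,b)` and increasing and
`f` is `g`-Lipschitz with constant `H`, then the jump part `f^B` is `g^B`-Lipschitz with
constant `H`. -/
theorem jumpPart_gLipschitz
    (a b H : ℝ) (hab : a ≤ b) (g f : ℝ → ℝ)
    (hg : MonotoneOn g (Set.Icc a b))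
    (hglc : LeftContOn g (Set.Ioo a b))
    (hf : GLipschitzOn f g H a b) :
    ∀ t ∈ Set.Icc a b, ∀ s ∈ Set.Icc a b,
      |jumpPart f a t - jumpPart f a s| ≤ H * |jumpPart g a t - jumpPart g a s| := by
  classical
  have key := rjump_key a b H hab g f hg hf
  set G := Gext g a b with hGdef
  have hGmono : Monotone G := Gext_mono hab hg
  -- summability of the g-jump indicators over any subset of [a,b)
  have hsum_g : ∀ I : Set ℝ, I ⊆ Set.Ico a b →
      Summable (Set.indicator I (fun v => rjump g v)) := by
    intro I hI
    apply summable_of_sum_le (c := g b - g a)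
    · intro v
      by_cases hv : v ∈ I
      · rw [Set.indicator_of_mem hv]; exact (key v (hI hv)).1
      · exact le_of_eq (Set.indicator_of_notMem hv _).symm
    · intro u
      have : ∑ v ∈ u, Set.indicator I (fun v => rjump g v) v
          = ∑ v ∈ u.filter (· ∈ I), rjump g v := by
        rw [Finset.sum_filter]
        exact Finset.sum_congr rfl fun v _ => Set.indicator_apply I _ v
      rw [this]
      have heq : ∑ v ∈ u.filter (· ∈ I), rjump g v
          = ∑ v ∈ u.filter (· ∈ I), (Function.rightLim G v - G v) := by
        refine Finset.sum_congr rfl fun v hv => ?_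
        have hvI : v ∈ I := (Finset.mem_filter.mp hv).2
        have h3 := (key v (hI hvI)).2.2
        have h4 : G v = g v := by rw [hGdef]; exact Gext_eq ⟨(hI hvI).1, (hI hvI).2.le⟩
        rw [h3, h4]
      rw [heq]
      have := jump_sum_le hGmono a (u.filter (· ∈ I)) b hab
        (fun v hv => (hI (Finset.mem_filter.mp hv).2))
      calc ∑ v ∈ u.filter (· ∈ I), (Function.rightLim G v - G v) ≤ G b - G a := this
        _ = g b - g a := by
            have hb : G b = g b := by rw [hGdef]; exact Gext_eq ⟨hab, le_rfl⟩
            have ha : G a = g a := by rw [hGdef]; exact Gext_eq ⟨le_rfl, hab⟩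
            rw [hb, ha]
  -- pointwise bound for the f-jump indicators
  have hptw : ∀ (I : Set ℝ), I ⊆ Set.Ico a b → ∀ v,
      |Set.indicator I (fun v => rjump f v) v| ≤ H * Set.indicator I (fun v => rjump g v) v := by
    intro I hI v
    by_cases hv : v ∈ I
    · rw [Set.indicator_of_mem hv, Set.indicator_of_mem hv]
      exact (key v (hI hv)).2.1
    · rw [Set.indicator_of_notMem hv, Set.indicator_of_notMem hv]
      simp
  have hsum_f : ∀ I : Set ℝ, I ⊆ Set.Ico a b →
      Summable (Set.indicator I (fun v => rjump f v)) := by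
    intro I hI
    rw [← summable_abs_iff]
    exact Summable.of_nonneg_of_le (fun v => abs_nonneg _) (hptw I hI)
      ((hsum_g I hI).mul_left H)
  -- main estimate for ordered pair s ≤ t
  have main : ∀ t ∈ Set.Icc a b, ∀ s ∈ Set.Icc a b, s ≤ t →
      |jumpPart f a t - jumpPart f a s| ≤ H * |jumpPart g a t - jumpPart g a s| := by
    intro t ht s hs hst
    have hIas : Set.Ico a s ⊆ Set.Ico a b := Set.Ico_subset_Ico le_rfl hs.2
    have hIat : Set.Ico a t ⊆ Set.Ico a b := Set.Ico_subset_Ico le_rfl ht.2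
    have hIst : Set.Ico s t ⊆ Set.Ico a b := Set.Ico_subset_Ico hs.1 ht.2
    have hdisj : Disjoint (Set.Ico a s) (Set.Ico s t) := Set.Ico_disjoint_Ico_same
    have hunion : Set.Ico a s ∪ Set.Ico s t = Set.Ico a t := Set.Ico_union_Ico_eq_Ico hs.1 hst
    have hsplit : ∀ u : ℝ → ℝ, Summable (Set.indicator (Set.Ico a s) (fun v => rjump u v)) →
        Summable (Set.indicator (Set.Ico s t) (fun v => rjump u v)) →
        jumpPart u a t - jumpPart u a s
          = ∑' v : ℝ, Set.indicator (Set.Ico s t) (fun v => rjump u v) v := by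
      intro u h1 h2
      have : jumpPart u a t = jumpPart u a s
          + ∑' v : ℝ, Set.indicator (Set.Ico s t) (fun v => rjump u v) v := by
        rw [jumpPart, jumpPart, ← Summable.tsum_add h1 h2]
        congr 1
        ext v
        rw [← hunion, Set.indicator_union_of_disjoint hdisj]
      linarith
    have hf_split := hsplit f (hsum_f _ hIas) (hsum_f _ hIst)
    have hg_split := hsplit g (hsum_g _ hIas) (hsum_g _ hIst)
    rw [hf_split, hg_split]
    have hg_nonneg : (0:ℝ) ≤ ∑' v : ℝ, Set.indicator (Set.Ico s t) (fun v => rjump g v) v := by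
      apply tsum_nonneg
      intro v
      by_cases hv : v ∈ Set.Ico s t
      · rw [Set.indicator_of_mem hv]; exact (key v (hIst hv)).1
      · rw [Set.indicator_of_notMem hv]
    rw [abs_of_nonneg hg_nonneg]
    have habs : Summable (fun v => |Set.indicator (Set.Ico s t) (fun v => rjump f v) v|) := by
      exact Summable.of_nonneg_of_le (fun v => abs_nonneg _) (hptw _ hIst)
        ((hsum_g _ hIst).mul_left H)
    calc |∑' v : ℝ, Set.indicator (Set.Ico s t) (fun v => rjump f v) v|
        ≤ ∑' v : ℝ, |Set.indicator (Set.Ico s t) (fun v => rjump f v) v| := by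
          have := norm_tsum_le_tsum_norm
            (f := Set.indicator (Set.Ico s t) (fun v => rjump f v))
            (by simpa only [Real.norm_eq_abs] using habs)
          simpa only [Real.norm_eq_abs] using this
      _ ≤ ∑' v : ℝ, H * Set.indicator (Set.Ico s t) (fun v => rjump g v) v :=
          Summable.tsum_le_tsum (hptw _ hIst) habs ((hsum_g _ hIst).mul_left H)
      _ = H * ∑' v : ℝ, Set.indicator (Set.Ico s t) (fun v => rjump g v) v := tsum_mul_left
  intro t ht s hs
  rcases le_total s t with h | h
  · exact main t ht s hs h
  · rw [abs_sub_comm (jumpPart f a t), abs_sub_comm (jumpPart g a t)]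
    exact main s hs t ht h
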